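/- Let C be a monoidal category and let (P, η) be a unital idempotent in C. For morphisms α, β : 𝟙 → P define α · β : 𝟙 → P as the composite λ_𝟙⁻¹ ≫ (α ⊗ β) ≫ (η ▷ P)⁻¹ ≫ λ_P. Then this product makes Hom(𝟙, P) into a commutative monoid with unit element η: the product is associative, commutative, and satisfies η · α = α = α · η for all α : 𝟙 → P. -/

import Mathlib

open CategoryTheory MonoidalCategory

/-- The tensor-induced product on `Hom(𝟙, P)` for a unital idempotent `(P, η)`:
`α · β := λ_𝟙⁻¹ ≫ (α ⊗ β) ≫ (η ▷ P)⁻¹ ≫ λ_P`. -/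
noncomputable def umul {C : Type*} [CategoryTheory.Category C]
    [CategoryTheory.MonoidalCategory C] {P : C} (η : 𝟙_ C ⟶ P)
    [CategoryTheory.IsIso (η ▷ P)] (α β : 𝟙_ C ⟶ P) : 𝟙_ C ⟶ P :=
  (λ_ (𝟙_ C)).inv ≫ (α ⊗ₘ β) ≫ CategoryTheory.inv (η ▷ P) ≫ (λ_ P).hom

set_option linter.unusedSectionVars false

section Aux
variable {C : Type*} [Category C] [MonoidalCategory C] {P : C} (η : 𝟙_ C ⟶ P)

/-- The multiplication `P ⊗ P ⟶ P` induced by the unital idempotent structure. -/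
noncomputable def mymu [IsIso (η ▷ P)] : P ⊗ P ⟶ P := inv (η ▷ P) ≫ (λ_ P).hom

lemma eta_mu [IsIso (η ▷ P)] : (η ▷ P) ≫ mymu η = (λ_ P).hom := by
  simp [mymu]

instance wliso {X : C} [IsIso (P ◁ η)] : IsIso ((X ⊗ P) ◁ η) := by
  have h : (X ⊗ P) ◁ η = (α_ X P (𝟙_ C)).hom ≫ X ◁ (P ◁ η) ≫ (α_ X P P).inv := by
    simp
  rw [h]
  have : IsIso (X ◁ (P ◁ η)) :=
    ⟨X ◁ inv (P ◁ η), by simp [← MonoidalCategory.whiskerLeft_comp],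
      by simp [← MonoidalCategory.whiskerLeft_comp]⟩
  infer_instance

/-- Cancel a right-whiskering by `P` (when `Y ◁ η` is invertible). -/
lemma cancel_wr {X Y : C} [IsIso (Y ◁ η)] (f g : X ⟶ Y) (h : f ▷ P = g ▷ P) : f = g := by
  have h1 : X ◁ η ≫ f ▷ P = X ◁ η ≫ g ▷ P := by rw [h]
  rw [whisker_exchange, whisker_exchange] at h1
  have h2 : f ▷ 𝟙_ C = g ▷ 𝟙_ C := (cancel_mono (Y ◁ η)).mp h1
  have := congrArg (fun k => (ρ_ X).inv ≫ k ≫ (ρ_ Y).hom) h2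
  simpa using this

/-- Cancel a precomposed `η` on morphisms out of `P`. -/
lemma eta_cancel [IsIso (η ▷ P)] {Y : C} [IsIso (Y ◁ η)] (f g : P ⟶ Y)
    (h : η ≫ f = η ≫ g) : f = g := by
  apply cancel_wr η
  have : (η ▷ P) ≫ f ▷ P = (η ▷ P) ≫ g ▷ P := by
    rw [← comp_whiskerRight, ← comp_whiskerRight, h]
  exact (cancel_epi (η ▷ P)).mp this

variable [IsIso (η ▷ P)] [IsIso (P ◁ η)]

/-- The two canonical maps `P ⟶ P ⊗ P` coincide for a unital idempotent. -/
lemma uv_eq : (ρ_ P).inv ≫ (P ◁ η) = (λ_ P).inv ≫ (η ▷ P) := by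
  apply eta_cancel η
  rw [← cancel_epi (λ_ (𝟙_ C)).hom]
  calc (λ_ (𝟙_ C)).hom ≫ η ≫ (ρ_ P).inv ≫ P ◁ η
      = (ρ_ (𝟙_ C)).hom ≫ η ≫ (ρ_ P).inv ≫ P ◁ η := by rw [unitors_equal]
    _ = (η ▷ 𝟙_ C) ≫ (ρ_ P).hom ≫ (ρ_ P).inv ≫ P ◁ η := by
          rw [← MonoidalCategory.rightUnitor_naturality]; simp
    _ = (η ▷ 𝟙_ C) ≫ P ◁ η := by simp
    _ = (𝟙_ C ◁ η) ≫ η ▷ P := by rw [whisker_exchange]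
    _ = (λ_ (𝟙_ C)).hom ≫ η ≫ (λ_ P).inv ≫ η ▷ P := by
          rw [← MonoidalCategory.leftUnitor_naturality_assoc]; simp

lemma mu_eta : (P ◁ η) ≫ mymu η = (ρ_ P).hom := by
  have h : (P ◁ η) = (ρ_ P).hom ≫ (λ_ P).inv ≫ (η ▷ P) := by
    rw [← uv_eq η]; simp
  rw [h]; simp [mymu]

/-- Left translation by `α` on `P`. -/
noncomputable def Lm (α : 𝟙_ C ⟶ P) : P ⟶ P := (λ_ P).inv ≫ (α ▷ P) ≫ mymu η
/-- Right translation by `α` on `P`. -/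
noncomputable def Rm (α : 𝟙_ C ⟶ P) : P ⟶ P := (ρ_ P).inv ≫ (P ◁ α) ≫ mymu η

lemma umul_eq_R (α β : 𝟙_ C ⟶ P) : umul η α β = α ≫ Rm η β := by
  have h1 : (λ_ (𝟙_ C)).inv ≫ α ▷ 𝟙_ C = α ≫ (ρ_ P).inv := by
    rw [unitors_inv_equal, ← MonoidalCategory.rightUnitor_inv_naturality]
  have h2 : inv (η ▷ P) ≫ (λ_ P).hom = mymu η := rfl
  rw [umul, Rm, MonoidalCategory.tensorHom_def]
  slice_lhs 1 2 => rw [h1]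
  simp [h2]

lemma umul_eq_L (α β : 𝟙_ C ⟶ P) : umul η α β = β ≫ Lm η α := by
  have h1 : (λ_ (𝟙_ C)).inv ≫ 𝟙_ C ◁ β = β ≫ (λ_ P).inv :=
    (MonoidalCategory.leftUnitor_inv_naturality β).symm
  have h2 : inv (η ▷ P) ≫ (λ_ P).hom = mymu η := rfl
  rw [umul, Lm, MonoidalCategory.tensorHom_def']
  slice_lhs 1 2 => rw [h1]
  simp [h2]

lemma Lm_eta : Lm η η = 𝟙 P := by
  rw [Lm, eta_mu]; simp

lemma Rm_eta : Rm η η = 𝟙 P := by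
  rw [Rm, mu_eta]; simp

lemma umul_one_left (α : 𝟙_ C ⟶ P) : umul η η α = α := by
  rw [umul_eq_L, Lm_eta]; simp

lemma umul_one_right (α : 𝟙_ C ⟶ P) : umul η α η = α := by
  rw [umul_eq_R, Rm_eta]; simp

lemma L_eq_R (α : 𝟙_ C ⟶ P) : Lm η α = Rm η α := by
  apply eta_cancel η
  have h1 : η ≫ Lm η α = α := by rw [← umul_eq_L, umul_one_right]
  have h2 : η ≫ Rm η α = α := by rw [← umul_eq_R, umul_one_left]
  rw [h1, h2]

lemma comm_LR (α γ : 𝟙_ C ⟶ P) : Lm η α ≫ Rm η γ = Rm η γ ≫ Lm η α := by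
  apply eta_cancel η
  have h1 : η ≫ Lm η α = α := by rw [← umul_eq_L, umul_one_right]
  have h2 : η ≫ Rm η γ = γ := by rw [← umul_eq_R, umul_one_left]
  rw [← Category.assoc, ← Category.assoc, h1, h2, ← umul_eq_R, ← umul_eq_L]

lemma umul_comm' (α β : 𝟙_ C ⟶ P) : umul η α β = umul η β α := by
  rw [umul_eq_L, umul_eq_R, L_eq_R]

lemma umul_assoc' (α β γ : 𝟙_ C ⟶ P) :
    umul η (umul η α β) γ = umul η α (umul η β γ) := by
  rw [umul_eq_R η (umul η α β) γ, umul_eq_L η α (umul η β γ),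
    umul_eq_L η α β, umul_eq_R η β γ, Category.assoc, Category.assoc, comm_LR]

end Aux

/-- Let `(P, η)` be a unital idempotent in a monoidal category `C`
(i.e. `η ▷ P` and `P ◁ η` are isomorphisms).  The product
`α · β := λ_𝟙⁻¹ ≫ (α ⊗ β) ≫ (η ▷ P)⁻¹ ≫ λ_P` makes `Hom(𝟙, P)` a commutative
monoid with unit `η`. -/
theorem statement6 {C : Type*} [Category C] [MonoidalCategory C]
    (P : C) (η : 𝟙_ C ⟶ P)
    [IsIso (η ▷ P)] [IsIso (P ◁ η)] :
    (∀ α β γ : 𝟙_ C ⟶ P, umul η (umul η α β) γ = umul η α (umul η β γ)) ∧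
    (∀ α β : 𝟙_ C ⟶ P, umul η α β = umul η β α) ∧
    (∀ α : 𝟙_ C ⟶ P, umul η η α = α) ∧
    (∀ α : 𝟙_ C ⟶ P, umul η α η = α) := by
  exact ⟨umul_assoc' η, umul_comm' η, umul_one_left η, umul_one_right η⟩
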